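/- Let n ≥ 4 and let v be an n-dimensional unit vector all of whose entries lie in ℤ[1/2], with lde₂(v) > 0. Then there exist finitely many generators G₁, …, G_ℓ, each taken from the set {(-1)_[a], X_[a,b], (H⊗H)_[a,b,c,d] : a, b, c, d distinct elements of {1,…,n}}, such that v' = G₁ ⋯ G_ℓ v satisfies lde₂(v') < lde₂(v). -/

import Mathlib

open Matrix Complex

noncomputable section

/-- The `m`-level operator of type `W` with indices `f 0, …, f (m-1)`:
for injective `f`, its `(f j', f k')` entry is `W j' k'` and it agrees
with the identity matrix elsewhere. -/
def levelOp {n m : ℕ} (f : Fin m → Fin n) (W : Matrix (Fin m) (Fin m) ℂ) :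
    Matrix (Fin n) (Fin n) ℂ := fun j k =>
  (∑ j' : Fin m, ∑ k' : Fin m, if f j' = j ∧ f k' = k then W j' k' else 0) +
  (if j = k ∧ ∀ j' : Fin m, f j' ≠ j then 1 else 0)

/-- The NOT gate `X`. -/
def Xmat : Matrix (Fin 2) (Fin 2) ℂ := !![0, 1; 1, 0]

/-- The Hadamard gate `H`. -/
def Hmat : Matrix (Fin 2) (Fin 2) ℂ := (Real.sqrt 2 : ℂ)⁻¹ • !![1, 1; 1, -1]

/-- The Kronecker product `H ⊗ H`, a 4×4 matrix. -/
def HHmat : Matrix (Fin 4) (Fin 4) ℂ :=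
  (2 : ℂ)⁻¹ • !![1, 1, 1, 1; 1, -1, 1, -1; 1, 1, -1, -1; 1, -1, -1, 1]

/-- `G` is one of the generators `(-1)_[a]`, `X_[a,b]`, `(H⊗H)_[a,b,c,d]`
with `a, b, c, d` distinct. -/
def IsIntGen {n : ℕ} (G : Matrix (Fin n) (Fin n) ℂ) : Prop :=
  (∃ a : Fin n, G = levelOp ![a] !![-1]) ∨
  (∃ a b : Fin n, a ≠ b ∧ G = levelOp ![a, b] Xmat) ∨
  (∃ a b c d : Fin n, a ≠ b ∧ a ≠ c ∧ a ≠ d ∧ b ≠ c ∧ b ≠ d ∧ c ≠ d ∧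
    G = levelOp ![a, b, c, d] HHmat)

/-- `x` is a dyadic fraction: an element of `ℤ[1/2]` (viewed inside `ℂ`). -/
def IsDyadic (x : ℂ) : Prop := ∃ (u : ℤ) (q : ℕ), x = (u : ℂ) / 2 ^ q

/-- The least 2-denominator exponent of a vector `v` with entries in `ℤ[1/2]`:
the least `q : ℕ` such that `2^q · v` has integer entries. -/
def lde2 {n : ℕ} (v : Fin n → ℂ) : ℕ :=
  sInf {q : ℕ | ∀ j, ∃ u : ℤ, (2 : ℂ) ^ q * v j = (u : ℂ)}

/- ## Auxiliary lemmas -/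

lemma mulVec_levelOp_notMem {n m : ℕ} (f : Fin m → Fin n) (W : Matrix (Fin m) (Fin m) ℂ)
    (v : Fin n → ℂ) {j : Fin n} (hj : ∀ j', f j' ≠ j) :
    (levelOp f W).mulVec v j = v j := by
  have hrow : ∀ k, levelOp f W j k = if j = k then 1 else 0 := by
    intro k
    unfold levelOp
    rw [Finset.sum_eq_zero, zero_add]
    · simp [hj]
    · intro j' _
      rw [Finset.sum_eq_zero]
      intro k' _
      simp [hj j']
  simp [Matrix.mulVec, dotProduct, hrow, ite_mul, Finset.sum_ite_eq]

lemma mulVec_levelOp_mem {n m : ℕ} {f : Fin m → Fin n} (hf : Function.Injective f)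
    (W : Matrix (Fin m) (Fin m) ℂ) (v : Fin n → ℂ) (j₀ : Fin m) :
    (levelOp f W).mulVec v (f j₀) = ∑ k', W j₀ k' * v (f k') := by
  have hrow : ∀ k, levelOp f W (f j₀) k = ∑ k' : Fin m, if f k' = k then W j₀ k' else 0 := by
    intro k
    unfold levelOp
    rw [if_neg (by rintro ⟨-, h⟩; exact h j₀ rfl), add_zero]
    rw [Finset.sum_comm]
    simp only [hf.eq_iff, ite_and]
    refine Finset.sum_congr rfl fun k' _ => ?_
    rw [Finset.sum_ite_eq' Finset.univ j₀ (fun j' => if f k' = k then W j' k' else 0)]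
    simp
  simp only [Matrix.mulVec, dotProduct, hrow, Finset.sum_mul, ite_mul, zero_mul]
  rw [Finset.sum_comm]
  refine Finset.sum_congr rfl fun k' _ => ?_
  rw [Finset.sum_ite_eq Finset.univ (f k') (fun k => W j₀ k' * v k)]
  simp

lemma mulVec_flip {n : ℕ} (a : Fin n) (v : Fin n → ℂ) :
    (levelOp ![a] !![-1]).mulVec v = fun j => if j = a then -(v a) else v j := by
  funext j
  by_cases h : j = a
  · subst h
    have := mulVec_levelOp_mem (f := ![j]) (fun x y _ => Subsingleton.elim x y)
      !![-1] v 0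
    simpa using this
  · rw [mulVec_levelOp_notMem]
    · simp [h]
    · intro j'
      fin_cases j'
      simpa using Ne.symm h

lemma inj4 {n : ℕ} {a b c d : Fin n} (hab : a ≠ b) (hac : a ≠ c) (had : a ≠ d)
    (hbc : b ≠ c) (hbd : b ≠ d) (hcd : c ≠ d) : Function.Injective ![a, b, c, d] := by
  intro x y hxy
  fin_cases x <;> fin_cases y <;> simp_all

lemma mulVec_HH {n : ℕ} {a b c d : Fin n} (hab : a ≠ b) (hac : a ≠ c) (had : a ≠ d)
    (hbc : b ≠ c) (hbd : b ≠ d) (hcd : c ≠ d) (v : Fin n → ℂ) :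
    (levelOp ![a, b, c, d] HHmat).mulVec v = fun j =>
      if j = a then 2⁻¹ * (v a + v b + v c + v d)
      else if j = b then 2⁻¹ * (v a - v b + v c - v d)
      else if j = c then 2⁻¹ * (v a + v b - v c - v d)
      else if j = d then 2⁻¹ * (v a - v b - v c + v d)
      else v j := by
  have hf := inj4 hab hac had hbc hbd hcd
  have key : ∀ j₀ : Fin 4, (levelOp ![a, b, c, d] HHmat).mulVec v (![a, b, c, d] j₀) =
      HHmat j₀ 0 * v a + HHmat j₀ 1 * v b + HHmat j₀ 2 * v c + HHmat j₀ 3 * v d := by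
    intro j₀
    have := mulVec_levelOp_mem hf HHmat v j₀
    rw [this, Fin.sum_univ_four]
    rfl
  funext j
  by_cases h1 : j = a
  · subst h1
    have := key 0
    simp only [show (![j, b, c, d] : Fin 4 → Fin n) 0 = j from rfl] at this
    rw [this]
    simp only [HHmat]
    norm_num [Matrix.smul_apply]
    simp only [Matrix.cons_val]
    ring
  · by_cases h2 : j = b
    · subst h2
      have := key 1
      simp only [show (![a, j, c, d] : Fin 4 → Fin n) 1 = j from rfl] at this
      rw [this]
      simp only [HHmat]
      norm_num [Matrix.smul_apply, h1]
      simp only [Matrix.cons_val]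
      ring
    · by_cases h3 : j = c
      · subst h3
        have := key 2
        simp only [show (![a, b, j, d] : Fin 4 → Fin n) 2 = j from rfl] at this
        rw [this]
        simp only [HHmat]
        norm_num [Matrix.smul_apply, Matrix.vecHead, Matrix.vecTail, h1, h2]
        simp only [Matrix.cons_val]
        ring
      · by_cases h4 : j = d
        · subst h4
          have := key 3
          simp only [show (![a, b, c, j] : Fin 4 → Fin n) 3 = j from rfl] at this
          rw [this]
          simp only [HHmat]
          norm_num [Matrix.smul_apply, Matrix.vecHead, Matrix.vecTail, h1, h2, h3]
          simp only [Matrix.cons_val]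
          ring
        · rw [mulVec_levelOp_notMem]
          · simp [h1, h2, h3, h4]
          · intro j'
            fin_cases j' <;> simp_all [eq_comm]

lemma prod_append_mulVec {n : ℕ} (L1 L2 : List (Matrix (Fin n) (Fin n) ℂ)) (v : Fin n → ℂ) :
    (L1 ++ L2).prod.mulVec v = L1.prod.mulVec (L2.prod.mulVec v) := by
  rw [List.prod_append, ← Matrix.mulVec_mulVec]

lemma normalize_lem {n : ℕ} (q : ℕ) (v : Fin n → ℂ) (w : Fin n → ℤ)
    (hv : ∀ j, (2:ℂ)^q * v j = w j) (x : Fin n) :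
    ∃ (L : List (Matrix (Fin n) (Fin n) ℂ)) (w' : Fin n → ℤ),
      (∀ G ∈ L, IsIntGen G) ∧ (∀ j, (2:ℂ)^q * (L.prod.mulVec v) j = w' j) ∧
      (∀ j, j ≠ x → w' j = w j) ∧ (Odd (w x) → w' x % 4 = 1) := by
  by_cases h : w x % 4 = 3
  · refine ⟨[levelOp ![x] !![-1]], fun j => if j = x then -(w x) else w j, ?_, ?_, ?_, ?_⟩
    · intro G hG
      simp only [List.mem_singleton] at hG
      subst hG
      exact Or.inl ⟨x, rfl⟩
    · intro j
      simp only [List.prod_cons, List.prod_nil, mul_one, mulVec_flip]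
      by_cases hj : j = x
      · subst hj
        simp only [if_pos rfl]
        push_cast
        rw [mul_neg, hv]
      · simp only [if_neg hj]
        exact hv j
    · intro j hj
      simp [hj]
    · intro _
      show (if x = x then -(w x) else w x) % 4 = 1
      rw [if_pos rfl]
      omega
  · refine ⟨[], fun j => w j, ?_, ?_, fun j _ => rfl, ?_⟩
    · simp
    · intro j
      simpa using hv j
    · intro hodd
      obtain ⟨k, hk⟩ := hodd
      show w x % 4 = 1
      omega

lemma quadstep {n : ℕ} (q : ℕ) (v : Fin n → ℂ) (w : Fin n → ℤ)
    (hv : ∀ j, (2:ℂ)^q * v j = w j) (a b c d : Fin n)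
    (hab : a ≠ b) (hac : a ≠ c) (had : a ≠ d) (hbc : b ≠ c) (hbd : b ≠ d) (hcd : c ≠ d)
    (ha : Odd (w a)) (hb : Odd (w b)) (hc : Odd (w c)) (hd : Odd (w d)) :
    ∃ (L : List (Matrix (Fin n) (Fin n) ℂ)) (w' : Fin n → ℤ),
      (∀ G ∈ L, IsIntGen G) ∧ (∀ j, (2:ℂ)^q * (L.prod.mulVec v) j = w' j) ∧
      (∀ j, Odd (w' j) ↔ Odd (w j) ∧ j ≠ a ∧ j ≠ b ∧ j ≠ c ∧ j ≠ d) := by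
  obtain ⟨L1, w1, hg1, hv1, he1, hx1⟩ := normalize_lem q v w hv a
  obtain ⟨L2, w2, hg2, hv2, he2, hx2⟩ := normalize_lem q _ w1 hv1 b
  obtain ⟨L3, w3, hg3, hv3, he3, hx3⟩ := normalize_lem q _ w2 hv2 c
  obtain ⟨L4, w4, hg4, hv4, he4, hx4⟩ := normalize_lem q _ w3 hv3 d
  -- values of w4 on the quadruple and outside
  have hw4a : w4 a % 4 = 1 := by
    rw [he4 a had, he3 a hac, he2 a hab]
    exact hx1 ha
  have hw4b : w4 b % 4 = 1 := by
    rw [he4 b hbd, he3 b hbc]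
    exact hx2 (by rwa [he1 b (Ne.symm hab)])
  have hw4c : w4 c % 4 = 1 := by
    rw [he4 c hcd]
    exact hx3 (by rwa [he2 c (Ne.symm hbc), he1 c (Ne.symm hac)])
  have hw4d : w4 d % 4 = 1 := by
    exact hx4 (by rwa [he3 d (Ne.symm hcd), he2 d (Ne.symm hbd), he1 d (Ne.symm had)])
  have hout : ∀ j, j ≠ a → j ≠ b → j ≠ c → j ≠ d → w4 j = w j := by
    intro j hja hjb hjc hjd
    rw [he4 j hjd, he3 j hjc, he2 j hjb, he1 j hja]
  obtain ⟨ma, hma⟩ : ∃ m, w4 a + w4 b + w4 c + w4 d = 4 * m :=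
    ⟨(w4 a + w4 b + w4 c + w4 d) / 4, by omega⟩
  obtain ⟨mb, hmb⟩ : ∃ m, w4 a - w4 b + w4 c - w4 d = 4 * m :=
    ⟨(w4 a - w4 b + w4 c - w4 d) / 4, by omega⟩
  obtain ⟨mc, hmc⟩ : ∃ m, w4 a + w4 b - w4 c - w4 d = 4 * m :=
    ⟨(w4 a + w4 b - w4 c - w4 d) / 4, by omega⟩
  obtain ⟨md, hmd⟩ : ∃ m, w4 a - w4 b - w4 c + w4 d = 4 * m :=
    ⟨(w4 a - w4 b - w4 c + w4 d) / 4, by omega⟩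
  set v4 := L4.prod.mulVec (L3.prod.mulVec (L2.prod.mulVec (L1.prod.mulVec v))) with hv4def
  refine ⟨[levelOp ![a, b, c, d] HHmat] ++ L4 ++ L3 ++ L2 ++ L1,
    fun j => if j = a then 2*ma else if j = b then 2*mb else if j = c then 2*mc
      else if j = d then 2*md else w4 j, ?_, ?_, ?_⟩
  · intro G hG
    simp only [List.mem_append, List.mem_singleton] at hG
    rcases hG with ((((hG | hG) | hG) | hG) | hG)
    · subst hG
      exact Or.inr (Or.inr ⟨a, b, c, d, hab, hac, had, hbc, hbd, hcd, rfl⟩)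
    · exact hg4 G hG
    · exact hg3 G hG
    · exact hg2 G hG
    · exact hg1 G hG
  · intro j
    have hfold : ([levelOp ![a, b, c, d] HHmat] ++ L4 ++ L3 ++ L2 ++ L1).prod.mulVec v =
        (levelOp ![a, b, c, d] HHmat).mulVec v4 := by
      rw [show [levelOp ![a, b, c, d] HHmat] ++ L4 ++ L3 ++ L2 ++ L1 =
        [levelOp ![a, b, c, d] HHmat] ++ (L4 ++ (L3 ++ (L2 ++ L1))) by simp]
      rw [prod_append_mulVec, prod_append_mulVec, prod_append_mulVec, prod_append_mulVec]
      simp [hv4def]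
    rw [hfold, mulVec_HH hab hac had hbc hbd hcd]
    have hsa : (w4 a : ℂ) + w4 b + w4 c + w4 d = 4 * ma := by exact_mod_cast congrArg (Int.cast : ℤ → ℂ) hma
    have hsb : (w4 a : ℂ) - w4 b + w4 c - w4 d = 4 * mb := by exact_mod_cast congrArg (Int.cast : ℤ → ℂ) hmb
    have hsc : (w4 a : ℂ) + w4 b - w4 c - w4 d = 4 * mc := by exact_mod_cast congrArg (Int.cast : ℤ → ℂ) hmc
    have hsd : (w4 a : ℂ) - w4 b - w4 c + w4 d = 4 * md := by exact_mod_cast congrArg (Int.cast : ℤ → ℂ) hmd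
    by_cases h1 : j = a
    · subst h1
      simp only [if_pos rfl]
      push_cast
      linear_combination (2:ℂ)⁻¹ * (hv4 j + hv4 b + hv4 c + hv4 d) + 2⁻¹ * hsa
    · by_cases h2 : j = b
      · subst h2
        simp only [if_neg h1, if_pos rfl]
        push_cast
        linear_combination (2:ℂ)⁻¹ * (hv4 a - hv4 j + hv4 c - hv4 d) + 2⁻¹ * hsb
      · by_cases h3 : j = c
        · subst h3
          simp only [if_neg h1, if_neg h2, if_pos rfl]
          push_cast
          linear_combination (2:ℂ)⁻¹ * (hv4 a + hv4 b - hv4 j - hv4 d) + 2⁻¹ * hsc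
        · by_cases h4 : j = d
          · subst h4
            simp only [if_neg h1, if_neg h2, if_neg h3, if_pos rfl]
            push_cast
            linear_combination (2:ℂ)⁻¹ * (hv4 a - hv4 b - hv4 c + hv4 j) + 2⁻¹ * hsd
          · simp only [if_neg h1, if_neg h2, if_neg h3, if_neg h4]
            exact hv4 j
  · intro j
    by_cases h1 : j = a
    · subst h1
      simp only [if_pos rfl]
      constructor
      · intro h; exact absurd h (by simp [Int.even_mul])
      · rintro ⟨-, h, -⟩; exact absurd rfl h
    · by_cases h2 : j = b
      · subst h2
        simp only [if_neg h1, if_pos rfl]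
        constructor
        · intro h; exact absurd h (by simp [Int.even_mul])
        · rintro ⟨-, -, h, -⟩; exact absurd rfl h
      · by_cases h3 : j = c
        · subst h3
          simp only [if_neg h1, if_neg h2, if_pos rfl]
          constructor
          · intro h; exact absurd h (by simp [Int.even_mul])
          · rintro ⟨-, -, -, h, -⟩; exact absurd rfl h
        · by_cases h4 : j = d
          · subst h4
            simp only [if_neg h1, if_neg h2, if_neg h3, if_pos rfl]
            constructor
            · intro h; exact absurd h (by simp [Int.even_mul])
            · rintro ⟨-, -, -, -, h⟩; exact absurd rfl h
          · simp only [if_neg h1, if_neg h2, if_neg h3, if_neg h4]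
            rw [hout j h1 h2 h3 h4]
            simp [h1, h2, h3, h4]

lemma key_lem {n : ℕ} (q : ℕ) : ∀ (t : ℕ) (v : Fin n → ℂ) (w : Fin n → ℤ),
    (∀ j, (2:ℂ)^(q+1) * v j = w j) →
    (Finset.univ.filter fun j => Odd (w j)).card = 4 * t →
    ∃ L : List (Matrix (Fin n) (Fin n) ℂ), (∀ G ∈ L, IsIntGen G) ∧
      ∀ j, ∃ u : ℤ, (2:ℂ)^q * (L.prod.mulVec v) j = (u : ℂ) := by
  intro t
  induction t with
  | zero =>
    intro v w hv hcard
    refine ⟨[], by simp, fun j => ?_⟩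
    have hev : ¬ Odd (w j) := by
      intro h
      have hmem : j ∈ Finset.univ.filter fun j => Odd (w j) := by simp [h]
      have hzero : (Finset.univ.filter fun j => Odd (w j)).card = 0 := by simpa using hcard
      rw [Finset.card_eq_zero.mp hzero] at hmem
      simp at hmem
    rw [Int.not_odd_iff_even] at hev
    obtain ⟨u, hu⟩ := hev
    refine ⟨u, ?_⟩
    have h2 : (2:ℂ) ≠ 0 := two_ne_zero
    apply mul_left_cancel₀ h2
    have hwj : (w j : ℂ) = 2 * u := by rw [hu]; push_cast; ring
    simp only [List.prod_nil, Matrix.one_mulVec]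
    calc (2:ℂ) * ((2:ℂ)^q * v j) = (2:ℂ)^(q+1) * v j := by ring
    _ = (w j : ℂ) := hv j
    _ = 2 * u := hwj
  | succ t ih =>
    intro v w hv hcard
    have hc4 : 4 ≤ (Finset.univ.filter fun j => Odd (w j)).card := by omega
    set T := Finset.univ.filter fun j => Odd (w j) with hT
    have hane : T.Nonempty := Finset.card_pos.mp (by omega)
    obtain ⟨a, haT⟩ := hane
    have hbne : (T.erase a).Nonempty := Finset.card_pos.mp (by
      rw [Finset.card_erase_of_mem haT]; omega)
    obtain ⟨b, hbT'⟩ := hbne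
    obtain ⟨hba, hbT⟩ := Finset.mem_erase.mp hbT'
    have hcne : ((T.erase a).erase b).Nonempty := Finset.card_pos.mp (by
      rw [Finset.card_erase_of_mem hbT', Finset.card_erase_of_mem haT]; omega)
    obtain ⟨c, hcT'⟩ := hcne
    obtain ⟨hcb, hcT''⟩ := Finset.mem_erase.mp hcT'
    obtain ⟨hca, hcT⟩ := Finset.mem_erase.mp hcT''
    have hdne : (((T.erase a).erase b).erase c).Nonempty := Finset.card_pos.mp (by
      rw [Finset.card_erase_of_mem hcT', Finset.card_erase_of_mem hbT',
        Finset.card_erase_of_mem haT]; omega)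
    obtain ⟨d, hdT'⟩ := hdne
    obtain ⟨hdc, hdT''⟩ := Finset.mem_erase.mp hdT'
    obtain ⟨hdb, hdT'''⟩ := Finset.mem_erase.mp hdT''
    obtain ⟨hda, hdT⟩ := Finset.mem_erase.mp hdT'''
    have hodd : ∀ x, x ∈ T → Odd (w x) := fun x hx => (Finset.mem_filter.mp hx).2
    obtain ⟨L1, w1, hg1, hv1, hodd1⟩ := quadstep (q+1) v w hv a b c d
      (Ne.symm hba) (Ne.symm hca) (Ne.symm hda) (Ne.symm hcb) (Ne.symm hdb) (Ne.symm hdc)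
      (hodd a haT) (hodd b hbT) (hodd c hcT) (hodd d hdT)
    have hsub : ({a, b, c, d} : Finset (Fin n)) ⊆ T := by
      intro x hx
      simp only [Finset.mem_insert, Finset.mem_singleton] at hx
      rcases hx with rfl | rfl | rfl | rfl
      exacts [haT, hbT, hcT, hdT]
    have hcard4 : ({a, b, c, d} : Finset (Fin n)).card = 4 := by
      rw [Finset.card_insert_of_notMem (by simp [Ne.symm hba, Ne.symm hca, Ne.symm hda]),
        Finset.card_insert_of_notMem (by simp [Ne.symm hcb, Ne.symm hdb]),
        Finset.card_insert_of_notMem (by simp [Ne.symm hdc]), Finset.card_singleton]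
    have hfilter : (Finset.univ.filter fun j => Odd (w1 j)) = T \ {a, b, c, d} := by
      ext j
      simp only [Finset.mem_filter, Finset.mem_univ, true_and, Finset.mem_sdiff, hT,
        Finset.mem_insert, Finset.mem_singleton, hodd1 j]
      tauto
    have hcard1 : (Finset.univ.filter fun j => Odd (w1 j)).card = 4 * t := by
      rw [hfilter, Finset.card_sdiff_of_subset hsub, hcard4, hcard]
      omega
    obtain ⟨L2, hg2, hint⟩ := ih (L1.prod.mulVec v) w1 hv1 hcard1
    refine ⟨L2 ++ L1, ?_, ?_⟩
    · intro G hG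
      rcases List.mem_append.mp hG with h | h
      exacts [hg2 G h, hg1 G h]
    · rw [prod_append_mulVec]
      exact hint


theorem stmt7 (n : ℕ) (hn : 4 ≤ n) (v : Fin n → ℂ)
    (hunit : ∑ j, (starRingEnd ℂ) (v j) * v j = 1)
    (hD : ∀ j, IsDyadic (v j))
    (hlde : 0 < lde2 v) :
    ∃ L : List (Matrix (Fin n) (Fin n) ℂ),
      (∀ G ∈ L, IsIntGen G) ∧ lde2 (L.prod.mulVec v) < lde2 v := by
  classical
  have hSne : {q : ℕ | ∀ j, ∃ u : ℤ, (2 : ℂ) ^ q * v j = (u : ℂ)}.Nonempty := by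
    choose u qf hval using hD
    refine ⟨Finset.univ.sup qf, fun j => ⟨u j * 2 ^ (Finset.univ.sup qf - qf j), ?_⟩⟩
    have hle : qf j ≤ Finset.univ.sup qf := Finset.le_sup (Finset.mem_univ j)
    have hpow : (2:ℂ) ^ (Finset.univ.sup qf) = 2 ^ (Finset.univ.sup qf - qf j) * 2 ^ (qf j) := by
      rw [← pow_add]
      congr 1
      omega
    rw [hval j, hpow]
    push_cast
    field_simp
  have hmem : lde2 v ∈ {q : ℕ | ∀ j, ∃ u : ℤ, (2 : ℂ) ^ q * v j = (u : ℂ)} :=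
    Nat.sInf_mem hSne
  choose w hw using hmem
  set q := lde2 v with hqdef
  -- sum of squares equals 4^q
  have hvr : ∀ j, v j = (w j : ℂ) / 2 ^ q := by
    intro j
    rw [eq_div_iff (pow_ne_zero q (two_ne_zero))]
    linear_combination hw j
  have hsq : ∑ j, (w j) ^ 2 = 4 ^ q := by
    have h4 : (4:ℂ) ^ q = 2 ^ q * 2 ^ q := by rw [← mul_pow]; norm_num
    have hterm : ∀ j, (starRingEnd ℂ) (v j) * v j = (w j : ℂ) ^ 2 / (4:ℂ) ^ q := by
      intro j
      rw [hvr j, map_div₀, map_pow, map_intCast, map_ofNat, h4]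
      field_simp
    rw [Finset.sum_congr rfl fun j _ => hterm j, ← Finset.sum_div,
      div_eq_one_iff_eq (pow_ne_zero q (by norm_num))] at hunit
    have : ((∑ j, (w j) ^ 2 : ℤ) : ℂ) = ((4 ^ q : ℤ) : ℂ) := by push_cast; exact hunit
    exact_mod_cast this
  -- the number of odd entries is divisible by 4
  have hdvd : 4 ∣ (Finset.univ.filter fun j => Odd (w j)).card := by
    have hzmod : ((∑ j, (w j) ^ 2 : ℤ) : ZMod 4) = 0 := by
      rw [hsq]
      push_cast
      rw [show ((4:ZMod 4)) = 0 from rfl, zero_pow (by omega)]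
    have hsplit : ((∑ j, (w j) ^ 2 : ℤ) : ZMod 4)
        = ∑ j, if Odd (w j) then (1 : ZMod 4) else 0 := by
      push_cast
      refine Finset.sum_congr rfl fun j _ => ?_
      by_cases h : Odd (w j)
      · obtain ⟨k, hk⟩ := h
        rw [if_pos ⟨k, hk⟩, hk]
        push_cast
        ring_nf
        rw [show ((4:ZMod 4)) = 0 by rfl]
        ring
      · rw [Int.not_odd_iff_even] at h
        obtain ⟨k, hk⟩ := h
        rw [if_neg (by rw [Int.not_odd_iff_even]; exact ⟨k, hk⟩), hk]
        push_cast
        ring_nf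
        rw [show ((4:ZMod 4)) = 0 by rfl]
        ring
    rw [hsplit, Finset.sum_boole] at hzmod
    exact (ZMod.natCast_eq_zero_iff _ 4).mp hzmod
  obtain ⟨t, ht⟩ := hdvd
  have hv' : ∀ j, (2:ℂ) ^ ((q - 1) + 1) * v j = w j := by
    intro j
    rw [show (q - 1) + 1 = q by omega]
    exact hw j
  obtain ⟨L, hgen, hint⟩ := key_lem (q - 1) t v w hv' ht
  refine ⟨L, hgen, ?_⟩
  have hle : lde2 (L.prod.mulVec v) ≤ q - 1 := Nat.sInf_le hint
  omega
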